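/- Let n ≥ 2, p ≥ 1, and let K ⊂ ℝⁿ be a convex body with the origin in its interior, with gauge function g(K,x) = inf{ t > 0 : x ∈ tK }. Then for every nonzero nonnegative continuous function f : ℝⁿ → ℝ with compact support, ‖f‖₁^{n + p} ≤ ((n+p)/n)^{n} ( ∫_{ℝⁿ} f(x) g(K,x)^p dx )^{n} ‖f‖_∞^{p} vol(K)^{p}, where ‖f‖_∞ = sup_{x∈ℝⁿ} f(x). Equality holds if and only if f = a·χ_{bK} for some constants a, b > 0, i.e. f is a positive multiple of the characteristic function of a dilate of K. -/

import Mathlib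

open MeasureTheory Real
open scoped RealInnerProductSpace Pointwise

set_option maxHeartbeats 1600000

open Set
open scoped ENNReal

variable {n : ℕ} {K : Set (EuclideanSpace ℝ (Fin n))}

lemma lyz_sublevel (hK_conv : Convex ℝ K) (hK_cl : IsClosed K)
    (hK_zero : (0 : EuclideanSpace ℝ (Fin n)) ∈ interior K) {r : ℝ} (hr : 0 < r) :
    {x | gauge K x ≤ r} = r • K := by
  have hnhds : K ∈ nhds (0 : EuclideanSpace ℝ (Fin n)) := mem_interior_iff_mem_nhds.1 hK_zero
  have hmem : ∀ y : EuclideanSpace ℝ (Fin n), y ∈ K ↔ gauge K y ≤ 1 := fun y =>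
    ⟨gauge_le_one_of_mem, fun h => hK_cl.closure_eq ▸
      (gauge_le_one_iff_mem_closure hK_conv hnhds).mp h⟩
  ext x
  simp only [Set.mem_setOf_eq]
  rw [Set.mem_smul_set_iff_inv_smul_mem₀ hr.ne', hmem, gauge_smul_of_nonneg (inv_nonneg.2 hr.le),
    smul_eq_mul, inv_mul_le_iff₀ hr, mul_one]

lemma lyz_vol (hK_conv : Convex ℝ K) (hK_cl : IsClosed K)
    (hK_zero : (0 : EuclideanSpace ℝ (Fin n)) ∈ interior K) {r : ℝ} (hr : 0 < r) :
    volume {x | gauge K x ≤ r} = ENNReal.ofReal (r ^ (n : ℝ)) * volume K := by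
  rw [lyz_sublevel hK_conv hK_cl hK_zero hr, Measure.addHaar_smul,
    finrank_euclideanSpace_fin, abs_of_nonneg (by positivity), ← Real.rpow_natCast r n]

lemma lyz_dilate (hn : 1 ≤ n) {p : ℝ} (hp : 1 ≤ p) (hK_conv : Convex ℝ K)
    (hK_cpt : IsCompact K) (hK_zero : (0 : EuclideanSpace ℝ (Fin n)) ∈ interior K)
    {s : ℝ} (hs : 0 < s) :
    ∫⁻ x in {x | gauge K x ≤ s}, ENNReal.ofReal (gauge K x ^ p) =
      ENNReal.ofReal (((n : ℝ) / ((n : ℝ) + p)) * s ^ ((n : ℝ) + p) * (volume K).toReal) := by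
  have hK_cl : IsClosed K := hK_cpt.isClosed
  have hnhds : K ∈ nhds (0 : EuclideanSpace ℝ (Fin n)) := mem_interior_iff_mem_nhds.1 hK_zero
  have hg_cont : Continuous (gauge K) := continuous_gauge hK_conv hnhds
  have hnr : (0:ℝ) < n := by exact_mod_cast Nat.pos_of_ne_zero (by omega)
  have hp0 : (0:ℝ) < p := by linarith
  have hnp : (0:ℝ) < (n:ℝ) + p := by linarith
  set VK := (volume K).toReal with hVKdef
  have hKfin : volume K ≠ ∞ := hK_cpt.measure_lt_top.ne
  have hKofReal : ENNReal.ofReal VK = volume K := ENNReal.ofReal_toReal hKfin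
  have hVK0 : 0 ≤ VK := ENNReal.toReal_nonneg
  set B := {x : EuclideanSpace ℝ (Fin n) | gauge K x ≤ s} with hBdef
  set φ : ℝ → ℝ := fun t =>
    if t < s then ((s ^ (n:ℝ) - t ^ (n:ℝ)) * VK) * (p * t ^ (p-1)) else 0 with hφdef
  -- layer cake
  have g_int : ∀ t > (0:ℝ), IntervalIntegrable (fun u => p * u ^ (p-1)) volume 0 t := fun t _ =>
    (intervalIntegral.intervalIntegrable_rpow' (by linarith)).const_mul p
  have key := lintegral_comp_eq_lintegral_meas_lt_mul (volume.restrict B)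
      (f := gauge K) (g := fun u => p * u ^ (p-1))
      (Filter.Eventually.of_forall fun x => gauge_nonneg x)
      hg_cont.measurable.aemeasurable g_int
      (by filter_upwards [ae_restrict_mem measurableSet_Ioi] with t ht
          exact mul_nonneg hp0.le (Real.rpow_nonneg (le_of_lt ht) _))
  have hprim : ∀ a : ℝ, 0 ≤ a → (∫ u in (0:ℝ)..a, p * u ^ (p-1)) = a ^ p := by
    intro a ha
    rw [intervalIntegral.integral_const_mul, integral_rpow (Or.inl (by linarith)),
      sub_add_cancel, Real.zero_rpow hp0.ne', sub_zero]
    field_simp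
  have hL : (∫⁻ x in B, ENNReal.ofReal (∫ u in (0:ℝ)..gauge K x, p * u ^ (p-1)))
      = ∫⁻ x in B, ENNReal.ofReal (gauge K x ^ p) :=
    lintegral_congr fun x => by rw [hprim _ (gauge_nonneg x)]
  rw [hL] at key
  -- identify the tail-measure integrand
  have hmeasset : ∀ t : ℝ, MeasurableSet {a : EuclideanSpace ℝ (Fin n) | t < gauge K a} :=
    fun t => (isOpen_lt continuous_const hg_cont).measurableSet
  have hres : ∀ t ∈ Ioi (0:ℝ),
      (volume.restrict B) {a | t < gauge K a} * ENNReal.ofReal (p * t ^ (p-1))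
        = ENNReal.ofReal (φ t) := by
    intro t ht
    have ht0 : (0:ℝ) < t := ht
    rw [Measure.restrict_apply (hmeasset t)]
    by_cases hts : t < s
    · have hsub : {a | t < gauge K a} ∩ B
          = {x : EuclideanSpace ℝ (Fin n) | gauge K x ≤ s} \ {x | gauge K x ≤ t} := by
        ext y
        simp only [hBdef, mem_inter_iff, mem_setOf_eq, mem_diff, not_le]
        tauto
      have hsubset : {x : EuclideanSpace ℝ (Fin n) | gauge K x ≤ t}
          ⊆ {x | gauge K x ≤ s} := fun y hy => le_trans hy hts.le
      have hrnn : (0:ℝ) ≤ t ^ (n:ℝ) * VK := by positivity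
      have hmono : t ^ (n:ℝ) ≤ s ^ (n:ℝ) := Real.rpow_le_rpow ht0.le hts.le hnr.le
      rw [hsub, measure_diff hsubset
          ((isClosed_le hg_cont continuous_const).measurableSet.nullMeasurableSet)
          (by rw [lyz_vol hK_conv hK_cl hK_zero ht0]
              exact ENNReal.mul_ne_top ENNReal.ofReal_ne_top hKfin),
        lyz_vol hK_conv hK_cl hK_zero hs, lyz_vol hK_conv hK_cl hK_zero ht0,
        ← hKofReal, ← ENNReal.ofReal_mul (by positivity), ← ENNReal.ofReal_mul (by positivity),
        ← ENNReal.ofReal_sub _ hrnn, ← ENNReal.ofReal_mul (by nlinarith)]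
    -- goal: ofReal ((s^n*VK - t^n*VK) * (p*t^(p-1))) = ofReal (φ t)
      simp only [hφdef, if_pos hts]
      ring_nf
    · have hempty : {a | t < gauge K a} ∩ B = ∅ := by
        ext y
        simp only [hBdef, mem_inter_iff, mem_setOf_eq, mem_empty_iff_false, iff_false, not_and,
          not_le]
        intro h1
        exact lt_of_le_of_lt (not_lt.1 hts) h1
      rw [hempty, measure_empty, zero_mul]
      simp only [hφdef, if_neg hts, ENNReal.ofReal_zero]
  have hRHS : (∫⁻ t in Ioi (0:ℝ),
      (volume.restrict B) {a | t < gauge K a} * ENNReal.ofReal (p * t ^ (p-1)))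
        = ∫⁻ t in Ioi (0:ℝ), ENNReal.ofReal (φ t) :=
    setLIntegral_congr_fun measurableSet_Ioi hres
  -- integrability of φ
  haveI : IsFiniteMeasure (volume.restrict (Ioc (0:ℝ) s)) :=
    ⟨by rw [Measure.restrict_apply_univ, Real.volume_Ioc]; exact ENNReal.ofReal_lt_top⟩
  have hφmeas : Measurable φ := by
    apply Measurable.ite measurableSet_Iio _ measurable_const
    exact (((measurable_const.sub (measurable_id'.pow_const _)).mul measurable_const).mul
      ((measurable_id'.pow_const _).const_mul p))
  have h1 : IntegrableOn φ (Ioc (0:ℝ) s) := by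
    refine Integrable.mono' (integrable_const ((s ^ (n:ℝ) * VK) * (p * s ^ (p-1))))
      hφmeas.aestronglyMeasurable ?_
    filter_upwards [ae_restrict_mem measurableSet_Ioc] with t ht
    by_cases hts : t < s
    · rw [Real.norm_eq_abs, hφdef]
      simp only [if_pos hts]
      have h1' : t ^ (n:ℝ) ≤ s ^ (n:ℝ) := Real.rpow_le_rpow ht.1.le hts.le hnr.le
      have h2' : t ^ (p-1) ≤ s ^ (p-1) := Real.rpow_le_rpow ht.1.le ht.2 (by linarith)
      have h3' : (0:ℝ) ≤ t ^ (p-1) := Real.rpow_nonneg ht.1.le _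
      have h4' : s ^ (n:ℝ) - t ^ (n:ℝ) ≤ s ^ (n:ℝ) :=
        sub_le_self _ (Real.rpow_nonneg ht.1.le _)
      have h5' : (0:ℝ) ≤ s ^ (n:ℝ) - t ^ (n:ℝ) := sub_nonneg.2 h1'
      rw [abs_of_nonneg (mul_nonneg (mul_nonneg h5' hVK0) (mul_nonneg hp0.le h3'))]
      exact mul_le_mul (mul_le_mul_of_nonneg_right h4' hVK0)
        (mul_le_mul_of_nonneg_left h2' hp0.le) (mul_nonneg hp0.le h3') (by positivity)
    · rw [hφdef]
      simp only [if_neg hts, norm_zero]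
      positivity
  have h2 : IntegrableOn φ (Ioi s) :=
    (integrableOn_zero (ε' := ℝ)).congr_fun
      (fun t ht => (if_neg (not_lt.2 (le_of_lt ht))).symm) measurableSet_Ioi
  have hφint : IntegrableOn φ (Ioi (0:ℝ)) := by
    rw [← Ioc_union_Ioi_eq_Ioi hs.le]
    exact h1.union h2
  have hφnn : 0 ≤ᵐ[volume.restrict (Ioi (0:ℝ))] φ := by
    filter_upwards [ae_restrict_mem measurableSet_Ioi] with t ht
    by_cases hts : t < s
    · rw [hφdef]
      simp only [if_pos hts, Pi.zero_apply]
      have h1' : t ^ (n:ℝ) ≤ s ^ (n:ℝ) := Real.rpow_le_rpow (le_of_lt ht) hts.le hnr.le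
      have h3' : (0:ℝ) ≤ t ^ (p-1) := Real.rpow_nonneg (le_of_lt ht) _
      exact mul_nonneg (mul_nonneg (sub_nonneg.2 h1') hVK0) (mul_nonneg hp0.le h3')
    · rw [hφdef]
      simp only [if_neg hts, Pi.zero_apply, le_refl]
  have hofReal : ENNReal.ofReal (∫ t in Ioi (0:ℝ), φ t) = ∫⁻ t in Ioi (0:ℝ), ENNReal.ofReal (φ t) :=
    ofReal_integral_eq_lintegral_ofReal hφint hφnn
  -- compute ∫ φ
  have hzero : ∫ t in Ioi s, φ t = 0 := by
    rw [setIntegral_congr_fun measurableSet_Ioi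
      (fun t ht => (if_neg (not_lt.2 (le_of_lt ht)) : φ t = 0))]
    simp
  have hIoc : ∫ t in Ioi (0:ℝ), φ t = ∫ t in Ioc (0:ℝ) s, φ t := by
    rw [← Ioc_union_Ioi_eq_Ioi hs.le,
      setIntegral_union (Ioc_disjoint_Ioi le_rfl) measurableSet_Ioi h1 h2, hzero, add_zero]
  have hbody : ∫ t in Ioc (0:ℝ) s, φ t
      = ∫ t in Ioc (0:ℝ) s, ((VK*p*s^(n:ℝ)) * t^(p-1) - (VK*p) * t^((n:ℝ)+p-1)) := by
    apply setIntegral_congr_fun measurableSet_Ioc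
    intro t ht
    by_cases hts : t < s
    · rw [hφdef]
      simp only [if_pos hts]
      rw [show (n:ℝ)+p-1 = (n:ℝ)+(p-1) by ring, Real.rpow_add ht.1]
      ring
    · have hts' : t = s := le_antisymm ht.2 (not_lt.1 hts)
      subst hts'
      show (if t < t then ((t ^ (n:ℝ) - t ^ (n:ℝ)) * VK) * (p * t ^ (p-1)) else 0)
          = (VK*p*t^(n:ℝ)) * t^(p-1) - (VK*p) * t^((n:ℝ)+p-1)
      rw [if_neg (lt_irrefl t), show (n:ℝ)+p-1 = (n:ℝ)+(p-1) by ring, Real.rpow_add ht.1]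
      ring
  have hval : ∫ t in Ioc (0:ℝ) s, ((VK*p*s^(n:ℝ)) * t^(p-1) - (VK*p) * t^((n:ℝ)+p-1))
      = ((n : ℝ) / ((n : ℝ) + p)) * s ^ ((n : ℝ) + p) * VK := by
    rw [← intervalIntegral.integral_of_le hs.le]
    rw [intervalIntegral.integral_sub
      ((intervalIntegral.intervalIntegrable_rpow' (by linarith)).const_mul _)
      ((intervalIntegral.intervalIntegrable_rpow' (by linarith)).const_mul _),
      intervalIntegral.integral_const_mul, intervalIntegral.integral_const_mul,
      integral_rpow (Or.inl (by linarith)), integral_rpow (Or.inl (by linarith)),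
      sub_add_cancel, Real.zero_rpow hp0.ne',
      show (n:ℝ)+p-1+1 = (n:ℝ)+p by ring, Real.zero_rpow hnp.ne']
    rw [show ((n:ℝ)+p) = (n:ℝ)+p by ring, Real.rpow_add hs (n:ℝ) p]
    field_simp
    ring
  rw [key, hRHS, ← hofReal, hIoc, hbody, hval]


variable {n : ℕ} {K : Set (EuclideanSpace ℝ (Fin n))}

-- splitting / bathtub principle: among sets of given volume, sublevel sets of the gauge
-- minimize the integral of (gauge)^p
lemma lyz_split {p : ℝ} (hp : 1 ≤ p) (hK_conv : Convex ℝ K) (hK_cpt : IsCompact K)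
    (hK_zero : (0 : EuclideanSpace ℝ (Fin n)) ∈ interior K)
    {A : Set (EuclideanSpace ℝ (Fin n))} (hA : MeasurableSet A) {r : ℝ} (hr : 0 < r)
    (hvol : volume {x | gauge K x ≤ r} = volume A) (hfin : volume A ≠ ∞) :
    ∫⁻ x in {x | gauge K x ≤ r}, ENNReal.ofReal (gauge K x ^ p)
      ≤ ∫⁻ x in A, ENNReal.ofReal (gauge K x ^ p) := by
  have hnhds : K ∈ nhds (0 : EuclideanSpace ℝ (Fin n)) := mem_interior_iff_mem_nhds.1 hK_zero
  have hg_cont : Continuous (gauge K) := continuous_gauge hK_conv hnhds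
  set B := {x : EuclideanSpace ℝ (Fin n) | gauge K x ≤ r} with hBdef
  have hB : MeasurableSet B := (isClosed_le hg_cont continuous_const).measurableSet
  set G : EuclideanSpace ℝ (Fin n) → ℝ≥0∞ := fun x => ENNReal.ofReal (gauge K x ^ p) with hGdef
  have hsplitA : (∫⁻ x in A ∩ B, G x) + ∫⁻ x in A \ B, G x = ∫⁻ x in A, G x :=
    lintegral_inter_add_diff G A hB
  have hsplitB : (∫⁻ x in B ∩ A, G x) + ∫⁻ x in B \ A, G x = ∫⁻ x in B, G x :=
    lintegral_inter_add_diff G B hA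
  -- the two "moved mass" pieces have the same volume
  have hABfin : volume (A ∩ B) ≠ ∞ := fun h => hfin (eq_top_mono (measure_mono inter_subset_left) h)
  have hvol_eq : volume (B \ A) = volume (A \ B) := by
    have e1 : volume (B ∩ A) + volume (B \ A) = volume B := measure_inter_add_diff B hA
    have e2 : volume (A ∩ B) + volume (A \ B) = volume A := measure_inter_add_diff A hB
    rw [inter_comm] at e1
    rw [← hvol] at e2
    exact (ENNReal.add_right_inj hABfin).1 (e1.trans e2.symm)
  -- compare with the constant r^p on each piece
  have hup : (∫⁻ x in B \ A, G x) ≤ ENNReal.ofReal (r ^ p) * volume (B \ A) := by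
    rw [← setLIntegral_const (B \ A) (ENNReal.ofReal (r ^ p))]
    refine setLIntegral_mono' (hB.diff hA) fun x hx => ?_
    exact ENNReal.ofReal_le_ofReal
      (Real.rpow_le_rpow (gauge_nonneg x) hx.1 (by linarith))
  have hdown : ENNReal.ofReal (r ^ p) * volume (A \ B) ≤ ∫⁻ x in A \ B, G x := by
    rw [← setLIntegral_const (A \ B) (ENNReal.ofReal (r ^ p))]
    refine setLIntegral_mono' (hA.diff hB) fun x hx => ?_
    exact ENNReal.ofReal_le_ofReal
      (Real.rpow_le_rpow hr.le (le_of_not_ge hx.2) (by linarith))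
  calc ∫⁻ x in B, G x = (∫⁻ x in A ∩ B, G x) + ∫⁻ x in B \ A, G x := by
        rw [← hsplitB, inter_comm]
    _ ≤ (∫⁻ x in A ∩ B, G x) + ENNReal.ofReal (r ^ p) * volume (B \ A) := add_le_add le_rfl hup
    _ = (∫⁻ x in A ∩ B, G x) + ENNReal.ofReal (r ^ p) * volume (A \ B) := by rw [hvol_eq]
    _ ≤ (∫⁻ x in A ∩ B, G x) + ∫⁻ x in A \ B, G x := add_le_add le_rfl hdown
    _ = ∫⁻ x in A, G x := hsplitA


lemma lyz_flat {n : ℕ} (hn : 1 ≤ n) {f : EuclideanSpace ℝ (Fin n) → ℝ} (hf_cont : Continuous f)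
    (hf_nonneg : ∀ x, 0 ≤ f x) (hf_supp : HasCompactSupport f) (hf_ne : f ≠ 0)
    {M : ℝ} (hMpos : 0 < M) (hfM : ∀ x, f x ≤ M) {c₀ : ℝ}
    (hconst : ∀ᵐ t ∂(volume.restrict (Ioc (0:ℝ) M)),
      (volume {x | t < f x}).toReal = c₀) : False := by
  haveI : Nontrivial (EuclideanSpace ℝ (Fin n)) := by
    refine ⟨0, EuclideanSpace.single ⟨0, by omega⟩ 1, fun h => ?_⟩
    have := congrArg (fun v : EuclideanSpace ℝ (Fin n) => v ⟨0, by omega⟩) h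
    simp [EuclideanSpace.single_apply] at this
  set W : ℝ → ℝ≥0∞ := fun t => volume {x | t < f x} with hWdef
  have hW_anti : Antitone W := fun s t hst => measure_mono fun x hx => lt_of_le_of_lt hst hx
  have hsupp_fin : volume (tsupport f) ≠ ∞ := hf_supp.measure_lt_top.ne
  have hsub : ∀ t : ℝ, 0 < t → {x | t < f x} ⊆ tsupport f := by
    intro t ht x hx
    refine subset_closure (show f x ≠ 0 from fun h0 => ?_)
    simp only [mem_setOf_eq, h0] at hx
    exact absurd hx (not_lt.2 ht.le)
  have hWfin : ∀ t : ℝ, 0 < t → W t ≠ ∞ := fun t ht h =>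
    hsupp_fin (eq_top_mono (measure_mono (hsub t ht)) h)
  have haeW : ∀ᵐ t ∂(volume.restrict (Ioc (0:ℝ) M)), W t = ENNReal.ofReal c₀ := by
    filter_upwards [hconst, ae_restrict_mem measurableSet_Ioc] with t h1 h2
    rw [← h1, ENNReal.ofReal_toReal (hWfin t h2.1)]
  rw [ae_restrict_iff' measurableSet_Ioc] at haeW
  have hgood : ∀ S : Set ℝ, S ⊆ Ioc (0:ℝ) M → volume S ≠ 0 →
      ∃ u ∈ S, W u = ENNReal.ofReal c₀ := by
    intro S hSsub hS
    by_contra h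
    push_neg at h
    refine hS (measure_mono_null (fun u hu => ?_) (ae_iff.1 haeW))
    exact fun himp => h u hu (himp (hSsub hu))
  have hWconst : ∀ t ∈ Ioo (0:ℝ) M, W t = ENNReal.ofReal c₀ := by
    intro t ht
    obtain ⟨u1, hu1S, hu1⟩ := hgood (Ioc (t/2) t)
      (fun u hu => ⟨lt_trans (by linarith [ht.1] : (0:ℝ) < t/2) hu.1, le_trans hu.2 ht.2.le⟩)
      (by rw [Real.volume_Ioc]; simp only [ne_eq, ENNReal.ofReal_eq_zero, not_le]; linarith [ht.1])
    obtain ⟨u2, hu2S, hu2⟩ := hgood (Ioc t M) (fun u hu => ⟨lt_trans ht.1 hu.1, hu.2⟩)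
      (by rw [Real.volume_Ioc]; simp only [ne_eq, ENNReal.ofReal_eq_zero, not_le]; linarith [ht.2])
    exact le_antisymm (hu1 ▸ hW_anti hu1S.2) (hu2 ▸ hW_anti hu2S.1.le)
  have hcast : ∀ k : ℕ, (0:ℝ) < (k:ℝ) + 2 := fun k => by positivity
  have hsup : volume {x | 0 < f x} = ENNReal.ofReal c₀ := by
    have hUnion : {x : EuclideanSpace ℝ (Fin n) | 0 < f x}
        = ⋃ k : ℕ, {x | M / ((k:ℝ)+2) < f x} := by
      ext x
      simp only [mem_setOf_eq, mem_iUnion]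
      constructor
      · intro hx
        obtain ⟨k, hk⟩ := exists_nat_gt (M / f x)
        refine ⟨k, (div_lt_iff₀ (hcast k)).2 ?_⟩
        have h2 : M / f x < (k:ℝ)+2 := lt_trans hk (by linarith)
        have h3 := (div_lt_iff₀ hx).1 h2
        linarith [mul_comm ((k:ℝ)+2) (f x)]
      · rintro ⟨k, hk⟩
        exact lt_trans (by positivity) hk
    have hmono : Monotone (fun k : ℕ => {x : EuclideanSpace ℝ (Fin n) | M / ((k:ℝ)+2) < f x}) := by
      intro k l hkl x hx
      simp only [mem_setOf_eq] at hx ⊢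
      refine lt_of_le_of_lt ?_ hx
      exact div_le_div_of_nonneg_left hMpos.le (hcast k) (by exact_mod_cast by omega)
    rw [hUnion, hmono.measure_iUnion]
    have hvals : ∀ k : ℕ, volume {x : EuclideanSpace ℝ (Fin n) | M / ((k:ℝ)+2) < f x}
        = ENNReal.ofReal c₀ := fun k => hWconst _
      ⟨by positivity, div_lt_self hMpos (by linarith [Nat.cast_nonneg (α := ℝ) k])⟩
    simp only [hvals, iSup_const]
  have hinf : volume {x | M ≤ f x} = ENNReal.ofReal c₀ := by
    have hInter : {x : EuclideanSpace ℝ (Fin n) | M ≤ f x}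
        = ⋂ k : ℕ, {x | M - M/((k:ℝ)+2) < f x} := by
      ext x
      simp only [mem_setOf_eq, mem_iInter]
      constructor
      · intro hx k
        have : (0:ℝ) < M/((k:ℝ)+2) := by positivity
        linarith
      · intro hx
        by_contra hlt
        push_neg at hlt
        have hpos : 0 < M - f x := by linarith
        obtain ⟨k, hk⟩ := exists_nat_gt (M / (M - f x))
        have h2 : M / (M - f x) < (k:ℝ)+2 := lt_trans hk (by linarith)
        have h3 := (div_lt_iff₀ hpos).1 h2
        have h4 : M/((k:ℝ)+2) < M - f x :=
          (div_lt_iff₀ (hcast k)).2 (by linarith [mul_comm ((k:ℝ)+2) (M - f x)])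
        have := hx k
        linarith
    have hanti : Antitone (fun k : ℕ => {x : EuclideanSpace ℝ (Fin n) | M - M/((k:ℝ)+2) < f x}) := by
      intro k l hkl x hx
      simp only [mem_setOf_eq] at hx ⊢
      refine lt_of_le_of_lt ?_ hx
      have : M/((l:ℝ)+2) ≤ M/((k:ℝ)+2) :=
        div_le_div_of_nonneg_left hMpos.le (hcast k) (by exact_mod_cast by omega)
      linarith
    have hmem : ∀ k : ℕ, M - M/((k:ℝ)+2) ∈ Ioo (0:ℝ) M := by
      intro k
      constructor
      · have : M/((k:ℝ)+2) < M := div_lt_self hMpos (by linarith [Nat.cast_nonneg (α := ℝ) k])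
        linarith
      · have : (0:ℝ) < M/((k:ℝ)+2) := by positivity
        linarith
    rw [hInter, hanti.measure_iInter
      (fun k => (isOpen_lt continuous_const hf_cont).measurableSet.nullMeasurableSet)
      ⟨0, hWfin _ (hmem 0).1⟩]
    have hvals : ∀ k : ℕ, volume {x : EuclideanSpace ℝ (Fin n) | M - M/((k:ℝ)+2) < f x}
        = ENNReal.ofReal c₀ := fun k => hWconst _ (hmem k)
    simp only [hvals, iInf_const]
  have hsubset : {x : EuclideanSpace ℝ (Fin n) | M ≤ f x} ⊆ {x | 0 < f x} :=
    fun x hx => lt_of_lt_of_le hMpos hx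
  have hdiff : volume ({x : EuclideanSpace ℝ (Fin n) | 0 < f x} \ {x | M ≤ f x}) = 0 := by
    rw [measure_diff hsubset
      (isClosed_le continuous_const hf_cont).measurableSet.nullMeasurableSet
      (by rw [hinf]; exact ENNReal.ofReal_ne_top), hsup, hinf, tsub_self]
  have hUeq : {x : EuclideanSpace ℝ (Fin n) | 0 < f x ∧ f x < M}
      = {x | 0 < f x} \ {x | M ≤ f x} := by
    ext x; simp only [mem_setOf_eq, mem_diff, not_le]
  have hUopen : IsOpen {x : EuclideanSpace ℝ (Fin n) | 0 < f x ∧ f x < M} :=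
    (isOpen_lt continuous_const hf_cont).inter (isOpen_lt hf_cont continuous_const)
  have hUempty : {x : EuclideanSpace ℝ (Fin n) | 0 < f x ∧ f x < M} = ∅ := by
    by_contra h
    obtain ⟨x, hx⟩ := nonempty_iff_ne_empty.2 h
    exact absurd (hUeq ▸ hdiff) (hUopen.measure_pos volume ⟨x, hx⟩).ne'
  have htwo : ∀ x, f x = 0 ∨ f x = M := by
    intro x
    rcases (hf_nonneg x).eq_or_lt with h | h
    · exact Or.inl h.symm
    · refine Or.inr (le_antisymm (hfM x) ?_)
      by_contra hlt
      push_neg at hlt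
      have hx' : x ∈ {x | 0 < f x ∧ f x < M} := ⟨h, hlt⟩
      rw [hUempty] at hx'
      exact notMem_empty x hx'
  set Z := f ⁻¹' {0} with hZ
  have hZclosed : IsClosed Z := isClosed_singleton.preimage hf_cont
  have hZopen : IsOpen Z := by
    rw [← isClosed_compl_iff]
    have : Zᶜ = f ⁻¹' {M} := by
      ext x
      simp only [hZ, mem_compl_iff, mem_preimage, mem_singleton_iff]
      rcases htwo x with h | h
      · simp [h, hMpos.ne]
      · simp [h, hMpos.ne']
    rw [this]
    exact isClosed_singleton.preimage hf_cont
  rcases isClopen_iff.1 ⟨hZclosed, hZopen⟩ with h | h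
  · have hne : tsupport f ≠ univ := fun hu =>
      IsCompact.ne_univ (hu ▸ hf_supp : IsCompact (univ : Set (EuclideanSpace ℝ (Fin n)))) rfl
    obtain ⟨x, hx⟩ := nonempty_compl.2 hne
    have hx0 : f x = 0 := image_eq_zero_of_notMem_tsupport hx
    exact absurd (show x ∈ Z from hx0) (h ▸ notMem_empty x)
  · exact hf_ne (funext fun x => (h ▸ mem_univ x : x ∈ Z))

open scoped RealInnerProductSpace

/-- The moment inequality of Lutwak, Yang and Zhang, case `λ = ∞`, with sharp constant
`((n+p)/n)^n`, together with its equality case: `f` must be a positive multiple of the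
characteristic function of a dilate of `K`. -/
theorem LYZ_moment_inequality_top (n : ℕ) (hn : 2 ≤ n) (p : ℝ) (hp : 1 ≤ p)
    (K : Set (EuclideanSpace ℝ (Fin n))) (hK_conv : Convex ℝ K)
    (hK_cpt : IsCompact K) (hK_zero : (0 : EuclideanSpace ℝ (Fin n)) ∈ interior K)
    (f : EuclideanSpace ℝ (Fin n) → ℝ) (hf_cont : Continuous f)
    (hf_nonneg : ∀ x, 0 ≤ f x) (hf_supp : HasCompactSupport f) (hf_ne : f ≠ 0) :
    (∫ x, f x) ^ ((n : ℝ) + p) ≤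
      (((n : ℝ) + p) / n) ^ (n : ℝ) * (∫ x, f x * gauge K x ^ p) ^ (n : ℝ) *
        (⨆ x, f x) ^ p * (volume K).toReal ^ p ∧
    ((∫ x, f x) ^ ((n : ℝ) + p) =
      (((n : ℝ) + p) / n) ^ (n : ℝ) * (∫ x, f x * gauge K x ^ p) ^ (n : ℝ) *
        (⨆ x, f x) ^ p * (volume K).toReal ^ p ↔
      ∃ a b : ℝ, 0 < a ∧ 0 < b ∧ ∀ x, f x = Set.indicator (b • K) (fun _ => a) x) := by
  classical
  have hn1 : 1 ≤ n := by omega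
  have hK_cl : IsClosed K := hK_cpt.isClosed
  have hnhds : K ∈ nhds (0 : EuclideanSpace ℝ (Fin n)) := mem_interior_iff_mem_nhds.1 hK_zero
  have hg_cont : Continuous (gauge K) := continuous_gauge hK_conv hnhds
  have hnr : (0:ℝ) < n := by exact_mod_cast Nat.pos_of_ne_zero (by omega)
  have hp0 : (0:ℝ) < p := by linarith
  have hnp : (0:ℝ) < (n:ℝ) + p := by linarith
  set q : ℝ := ((n:ℝ) + p) / n with hqdef
  have hq1 : 1 < q := by rw [hqdef, lt_div_iff₀ hnr]; linarith
  have hq0 : 0 < q := by linarith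
  set VK := (volume K).toReal with hVKdef
  have hKfin : volume K ≠ ∞ := hK_cpt.measure_lt_top.ne
  have hKofReal : ENNReal.ofReal VK = volume K := ENNReal.ofReal_toReal hKfin
  have hVKpos : 0 < VK := ENNReal.toReal_pos
    ((lt_of_lt_of_le (isOpen_interior.measure_pos volume ⟨0, hK_zero⟩)
      (measure_mono interior_subset)).ne') hKfin
  -- the supremum of f
  obtain ⟨x₀, hx₀⟩ := hf_cont.exists_forall_ge_of_hasCompactSupport hf_supp
  have hbdd : BddAbove (Set.range f) := ⟨f x₀, by rintro y ⟨x, rfl⟩; exact hx₀ x⟩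
  set M := ⨆ x, f x with hMdef
  have hfM : ∀ x, f x ≤ M := fun x => le_ciSup hbdd x
  have hMpos : 0 < M := by
    obtain ⟨x₁, hx₁⟩ : ∃ x, f x ≠ 0 := by
      by_contra h; push_neg at h; exact hf_ne (funext h)
    exact lt_of_lt_of_le (lt_of_le_of_ne (hf_nonneg x₁) (Ne.symm hx₁)) (hfM x₁)
  -- the distribution function
  set W : ℝ → ℝ≥0∞ := fun t => volume {x | t < f x} with hWdef
  have hW_anti : Antitone W := fun s t hst => measure_mono fun x hx => lt_of_le_of_lt hst hx
  have hW_meas : Measurable W := hW_anti.measurable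
  set V : ℝ → ℝ := fun t => (W t).toReal with hVdef
  have hV_meas : Measurable V := hW_meas.ennreal_toReal
  have hV_nonneg : ∀ t, 0 ≤ V t := fun t => ENNReal.toReal_nonneg
  have hsupp_fin : volume (tsupport f) ≠ ∞ := hf_supp.measure_lt_top.ne
  have hsub : ∀ t : ℝ, 0 < t → {x | t < f x} ⊆ tsupport f := by
    intro t ht x hx
    refine subset_closure (show f x ≠ 0 from fun h0 => ?_)
    simp only [mem_setOf_eq, h0] at hx
    exact absurd hx (not_lt.2 ht.le)
  have hWfin : ∀ t : ℝ, 0 < t → W t ≠ ∞ := fun t ht h =>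
    hsupp_fin (eq_top_mono (measure_mono (hsub t ht)) h)
  have hVbd : ∀ t : ℝ, 0 < t → V t ≤ (volume (tsupport f)).toReal := fun t ht =>
    ENNReal.toReal_mono hsupp_fin (measure_mono (hsub t ht))
  have hAopen : ∀ t : ℝ, IsOpen {x | t < f x} := fun t => isOpen_lt continuous_const hf_cont
  have hAmeas : ∀ t : ℝ, MeasurableSet {x | t < f x} := fun t => (hAopen t).measurableSet
  -- integrability
  have hIint : Integrable f volume := hf_cont.integrable_of_hasCompactSupport hf_supp
  have hgp_cont : Continuous (fun x => gauge K x ^ p) :=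
    hg_cont.rpow_const (fun x => Or.inr hp0.le)
  have hJsupp : HasCompactSupport (fun x => f x * gauge K x ^ p) := hf_supp.mul_right
  have hJint : Integrable (fun x => f x * gauge K x ^ p) volume :=
    (hf_cont.mul hgp_cont).integrable_of_hasCompactSupport hJsupp
  set I := ∫ x, f x with hIdef
  set J := ∫ x, f x * gauge K x ^ p with hJdef
  have hJ0 : 0 ≤ J :=
    integral_nonneg fun x => mul_nonneg (hf_nonneg x) (Real.rpow_nonneg (gauge_nonneg x) p)
  -- Jensen setup
  set μ₀ := volume.restrict (Ioc (0:ℝ) M) with hμ₀def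
  haveI : IsFiniteMeasure μ₀ :=
    ⟨by rw [hμ₀def, Measure.restrict_apply_univ, Real.volume_Ioc]; exact ENNReal.ofReal_lt_top⟩
  haveI : NeZero μ₀ := by
    refine ⟨fun h => ?_⟩
    have h2 : μ₀ univ = 0 := by rw [h]; rfl
    rw [hμ₀def, Measure.restrict_apply_univ, Real.volume_Ioc] at h2
    rw [ENNReal.ofReal_eq_zero] at h2
    linarith
  have hVint : Integrable V μ₀ := by
    refine Integrable.mono' (integrable_const ((volume (tsupport f)).toReal))
      hV_meas.aestronglyMeasurable ?_
    filter_upwards [ae_restrict_mem measurableSet_Ioc] with t ht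
    rw [Real.norm_eq_abs, abs_of_nonneg (hV_nonneg t)]
    exact hVbd t ht.1
  have hVq_meas : Measurable (fun t => V t ^ q) := hV_meas.pow_const q
  have hVqint : Integrable (fun t => V t ^ q) μ₀ := by
    refine Integrable.mono' (integrable_const ((volume (tsupport f)).toReal ^ q))
      hVq_meas.aestronglyMeasurable ?_
    filter_upwards [ae_restrict_mem measurableSet_Ioc] with t ht
    rw [Real.norm_eq_abs, abs_of_nonneg (Real.rpow_nonneg (hV_nonneg t) q)]
    exact Real.rpow_le_rpow (hV_nonneg t) (hVbd t ht.1) hq0.le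
  set S := ∫ t in Ioc (0:ℝ) M, V t with hSdef
  set Q := ∫ t in Ioc (0:ℝ) M, V t ^ q with hQdef
  have hS0 : 0 ≤ S := setIntegral_nonneg measurableSet_Ioc fun t _ => hV_nonneg t
  have hQ0 : 0 ≤ Q :=
    setIntegral_nonneg measurableSet_Ioc fun t _ => Real.rpow_nonneg (hV_nonneg t) q
  -- strict Jensen
  have hJensen : S ^ q < M ^ (q - 1) * Q := by
    have hstrict := (strictConvexOn_rpow hq1).ae_eq_const_or_map_average_lt
      (continuousOn_id.rpow_const fun x _ => Or.inr hq0.le)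
      isClosed_Ici (Filter.Eventually.of_forall fun t => hV_nonneg t) hVint hVqint
    rcases hstrict with hconst | hlt
    · exact absurd hconst (fun hc => lyz_flat hn1 hf_cont hf_nonneg hf_supp hf_ne hMpos hfM
        (c₀ := ⨍ t, V t ∂μ₀) hc)
    · have hμuniv : μ₀.real univ = M := by
        rw [measureReal_def, hμ₀def, Measure.restrict_apply_univ, Real.volume_Ioc, sub_zero,
          ENNReal.toReal_ofReal hMpos.le]
      rw [average_eq, average_eq, hμuniv, smul_eq_mul, smul_eq_mul] at hlt
      -- hlt : (M⁻¹ * ∫ V ∂μ₀) ^ q < M⁻¹ * ∫ V^q ∂μ₀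
      have hMq : (0:ℝ) < M ^ q := Real.rpow_pos_of_pos hMpos q
      have hS' : M * (M⁻¹ * S) = S := by field_simp
      calc S ^ q = (M * (M⁻¹ * S)) ^ q := by rw [hS']
        _ = M ^ q * (M⁻¹ * S) ^ q :=
            Real.mul_rpow hMpos.le (by positivity)
        _ < M ^ q * (M⁻¹ * Q) := by exact mul_lt_mul_of_pos_left hlt hMq
        _ = M ^ (q-1) * Q := by
            rw [Real.rpow_sub hMpos, Real.rpow_one]
            field_simp
  -- layer cake for I
  have hVz : ∀ t ∈ Ioi M, V t = 0 := by
    intro t ht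
    have hempty : {x | t < f x} = ∅ := eq_empty_iff_forall_notMem.2 fun x hx =>
      absurd hx (not_lt.2 (le_trans (hfM x) (le_of_lt ht)))
    simp only [hVdef, hWdef, hempty, measure_empty, ENNReal.toReal_zero]
  have hVIoi : IntegrableOn V (Ioi M) volume :=
    (integrableOn_zero (ε' := ℝ)).congr_fun (fun t ht => (hVz t ht).symm) measurableSet_Ioi
  have hIoiIoc : ∫ t in Ioi (0:ℝ), V t = S := by
    rw [← Ioc_union_Ioi_eq_Ioi hMpos.le,
      setIntegral_union (Ioc_disjoint_Ioi le_rfl) measurableSet_Ioi hVint hVIoi]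
    rw [setIntegral_congr_fun measurableSet_Ioi hVz]
    simp
    rfl
  have hI_eq : I = S := by
    rw [hIdef, hIint.integral_eq_integral_meas_lt (Filter.Eventually.of_forall hf_nonneg)]
    exact hIoiIoc
  -- bathtub estimate for J
  set c : ℝ := ((n:ℝ)/((n:ℝ)+p)) * VK ^ (1 - q) with hcdef
  have hcpos : 0 < c := mul_pos (by positivity) (Real.rpow_pos_of_pos hVKpos _)
  have hbathtub : ∀ t : ℝ, 0 < t →
      ENNReal.ofReal (c * V t ^ q) ≤ ∫⁻ x in {x | t < f x}, ENNReal.ofReal (gauge K x ^ p) := by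
    intro t ht
    by_cases hV0 : V t = 0
    · rw [hV0, Real.zero_rpow hq0.ne', mul_zero, ENNReal.ofReal_zero]
      exact bot_le
    · have hVpos : 0 < V t := lt_of_le_of_ne (hV_nonneg t) (Ne.symm hV0)
      set r : ℝ := (V t / VK) ^ (1/(n:ℝ)) with hrdef
      have hrpos : 0 < r := Real.rpow_pos_of_pos (div_pos hVpos hVKpos) _
      have hrn : r ^ (n:ℝ) = V t / VK := by
        rw [hrdef, ← Real.rpow_mul (div_nonneg hVpos.le hVKpos.le), one_div,
          inv_mul_cancel₀ hnr.ne', Real.rpow_one]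
      have hvolr : volume {x | gauge K x ≤ r} = W t := by
        rw [lyz_vol hK_conv hK_cl hK_zero hrpos, hrn, ← hKofReal,
          ← ENNReal.ofReal_mul (div_nonneg hVpos.le hVKpos.le), div_mul_cancel₀ _ hVKpos.ne']
        exact ENNReal.ofReal_toReal (hWfin t ht)
      have hle := lyz_split hp hK_conv hK_cpt hK_zero (hAmeas t) hrpos hvolr (hWfin t ht)
      refine le_trans (le_of_eq ?_)
        (le_trans (le_of_eq (lyz_dilate hn1 hp hK_conv hK_cpt hK_zero hrpos).symm) hle)
      congr 1
      have hrnp : r ^ ((n:ℝ)+p) = (V t / VK) ^ q := by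
        rw [hrdef, ← Real.rpow_mul (div_nonneg hVpos.le hVKpos.le)]
        congr 1
        rw [hqdef]
        field_simp
      rw [hcdef, hrnp, Real.div_rpow (hV_nonneg t) hVKpos.le, Real.rpow_sub hVKpos,
        Real.rpow_one]
      field_simp
      ring
  have hJQ : c * Q ≤ J := by
    have e1 : ENNReal.ofReal J = ∫⁻ x, ENNReal.ofReal (f x * gauge K x ^ p) :=
      ofReal_integral_eq_lintegral_ofReal hJint (Filter.Eventually.of_forall fun x =>
        mul_nonneg (hf_nonneg x) (Real.rpow_nonneg (gauge_nonneg x) p))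
    set ν := volume.withDensity (fun x => ENNReal.ofReal (gauge K x ^ p)) with hνdef
    have hGmeas : Measurable fun x : EuclideanSpace ℝ (Fin n) =>
        ENNReal.ofReal (gauge K x ^ p) := hgp_cont.measurable.ennreal_ofReal
    have e2 : (∫⁻ x, ENNReal.ofReal (f x * gauge K x ^ p))
        = ∫⁻ x, ENNReal.ofReal (f x) ∂ν := by
      rw [hνdef, lintegral_withDensity_eq_lintegral_mul _ hGmeas
        hf_cont.measurable.ennreal_ofReal]
      refine lintegral_congr fun x => ?_
      simp only [Pi.mul_apply]
      rw [ENNReal.ofReal_mul (hf_nonneg x), mul_comm]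
    have e3 : (∫⁻ x, ENNReal.ofReal (f x) ∂ν) = ∫⁻ t in Ioi 0, ν {a | t < f a} :=
      lintegral_eq_lintegral_meas_lt ν (Filter.Eventually.of_forall hf_nonneg)
        hf_cont.measurable.aemeasurable
    have e4 : (∫⁻ t in Ioc (0:ℝ) M, ENNReal.ofReal (c * V t ^ q))
        ≤ ∫⁻ t in Ioi (0:ℝ), ν {a | t < f a} := by
      refine le_trans (lintegral_mono_ae ?_)
        (lintegral_mono' (Measure.restrict_mono Ioc_subset_Ioi_self le_rfl) le_rfl)
      filter_upwards [ae_restrict_mem measurableSet_Ioc] with t ht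
      rw [hνdef, withDensity_apply _ (hAmeas t)]
      exact hbathtub t ht.1
    have e5 : ENNReal.ofReal (c * Q) = ∫⁻ t in Ioc (0:ℝ) M, ENNReal.ofReal (c * V t ^ q) := by
      rw [hQdef, ← integral_const_mul]
      exact ofReal_integral_eq_lintegral_ofReal (hVqint.const_mul c)
        (Filter.Eventually.of_forall fun t =>
          mul_nonneg hcpos.le (Real.rpow_nonneg (hV_nonneg t) q))
    have hle : ENNReal.ofReal (c * Q) ≤ ENNReal.ofReal J := by
      rw [e5, e1, e2, e3]
      exact e4
    exact (ENNReal.ofReal_le_ofReal_iff hJ0).1 hle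
  -- final algebra
  have h1 : I ^ ((n:ℝ)+p) = (S ^ q) ^ (n:ℝ) := by
    rw [hI_eq, ← Real.rpow_mul hS0, hqdef, div_mul_cancel₀ _ hnr.ne']
  have h2 : (S ^ q) ^ (n:ℝ) < (M ^ (q-1) * Q) ^ (n:ℝ) :=
    Real.rpow_lt_rpow (Real.rpow_nonneg hS0 q) hJensen hnr
  have h3 : (M ^ (q-1) * Q) ^ (n:ℝ) ≤ (M ^ (q-1) * (c⁻¹ * J)) ^ (n:ℝ) := by
    apply Real.rpow_le_rpow (by positivity) _ hnr.le
    have hQle : Q ≤ c⁻¹ * J := by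
      calc Q = c⁻¹ * (c * Q) := by field_simp
        _ ≤ c⁻¹ * J := mul_le_mul_of_nonneg_left hJQ (inv_nonneg.2 hcpos.le)
    exact mul_le_mul_of_nonneg_left hQle (Real.rpow_nonneg hMpos.le _)
  have hq1n : (q-1) * n = p := by rw [hqdef, sub_mul, div_mul_cancel₀ _ hnr.ne']; ring
  have h4 : (M ^ (q-1) * (c⁻¹ * J)) ^ (n:ℝ)
      = (((n:ℝ)+p)/n) ^ (n:ℝ) * J ^ (n:ℝ) * M ^ p * VK ^ p := by
    have hJn : 0 ≤ c⁻¹ * J := mul_nonneg (inv_nonneg.2 hcpos.le) hJ0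
    have hcinv : c⁻¹ = (((n:ℝ)+p)/n) * VK ^ (q-1) := by
      rw [hcdef, mul_inv, inv_div, ← Real.rpow_neg hVKpos.le, neg_sub]
    have hcn : (c⁻¹) ^ (n:ℝ) = (((n:ℝ)+p)/n) ^ (n:ℝ) * VK ^ p := by
      rw [hcinv, Real.mul_rpow (by positivity) (Real.rpow_nonneg hVKpos.le _),
        ← Real.rpow_mul hVKpos.le, hq1n]
    rw [Real.mul_rpow (Real.rpow_nonneg hMpos.le _) hJn,
      Real.mul_rpow (inv_nonneg.2 hcpos.le) hJ0, hcn,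
      ← Real.rpow_mul hMpos.le, hq1n]
    ring
  have hfinal : I ^ ((n:ℝ) + p)
      < (((n:ℝ)+p)/n) ^ (n:ℝ) * J ^ (n:ℝ) * M ^ p * VK ^ p := by
    rw [h1]
    exact lt_of_lt_of_le h2 (h3.trans_eq h4)
  refine ⟨hfinal.le, ⟨fun heq => absurd heq hfinal.ne, ?_⟩⟩
  -- the indicator case contradicts continuity
  rintro ⟨a, b, ha, hb, hind⟩
  exfalso
  haveI : Nontrivial (EuclideanSpace ℝ (Fin n)) := by
    refine ⟨0, EuclideanSpace.single ⟨0, by omega⟩ 1, fun h => ?_⟩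
    have := congrArg (fun v : EuclideanSpace ℝ (Fin n) => v ⟨0, by omega⟩) h
    simp [EuclideanSpace.single_apply] at this
  set B := b • K with hBdef
  have hBcpt : IsCompact B := by
    rw [hBdef, ← Set.image_smul]
    exact hK_cpt.image (continuous_const_smul b)
  have hBclosed : IsClosed B := hBcpt.isClosed
  have h0B : (0 : EuclideanSpace ℝ (Fin n)) ∈ interior B := by
    rw [hBdef, interior_smul₀ hb.ne' K]
    exact ⟨0, hK_zero, smul_zero b⟩
  have hBne_univ : B ≠ univ := fun h =>
    IsCompact.ne_univ (h ▸ hBcpt : IsCompact (univ : Set (EuclideanSpace ℝ (Fin n)))) rfl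
  have hfront : (frontier B).Nonempty := by
    by_contra h
    rw [not_nonempty_iff_eq_empty] at h
    rcases isClopen_iff.1 (isClopen_iff_frontier_eq_empty.2 h) with h1 | h1
    · exact absurd (h1 ▸ (interior_subset h0B)) (notMem_empty (0 : EuclideanSpace ℝ (Fin n)))
    · exact hBne_univ h1
  obtain ⟨z, hz⟩ := hfront
  rw [frontier_eq_closure_inter_closure] at hz
  have hzB : z ∈ B := hBclosed.closure_eq ▸ hz.1
  have hfz : f z = a := by rw [hind z, indicator_of_mem hzB]
  have hfz0 : f z = 0 := by
    have hcl : Bᶜ ⊆ {x | f x = 0} := fun x hx => by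
      show f x = 0
      rw [hind x]
      exact indicator_of_notMem hx _
    have hclosed0 : IsClosed {x : EuclideanSpace ℝ (Fin n) | f x = 0} :=
      isClosed_eq hf_cont continuous_const
    exact hclosed0.closure_subset_iff.2 hcl hz.2
  rw [hfz] at hfz0
  exact ha.ne' hfz0
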